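/- Let b_1 < b_2 < b_3 < ... be an increasing sequence of natural numbers with b_i | b_{i+1} for all i, and let H_1, H_2, H_3, ... be Buck measurable subsets of ℕ such that every element of ⋃_{i=1}^∞ H_i is relatively prime to every b_j. Then the set H = ⋃_{i=1}^∞ b_i H_i is Buck measurable and μ(H) = Σ_{i=1}^∞ μ(H_i)/b_i. -/

import Mathlib

open scoped BigOperators

/-- Buck's measure density: the infimum of `∑ 1/mᵢ` over finite covers of `S`
by arithmetic progressions `{n | n ≡ rᵢ [MOD mᵢ]}`. -/
noncomputable def buckDensity (S : Set ℕ) : ℝ :=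
  sInf {x : ℝ | ∃ (k : ℕ) (r m : Fin k → ℕ), (∀ i, 0 < m i) ∧
    (S ⊆ ⋃ i, {n : ℕ | n ≡ r i [MOD m i]}) ∧ x = ∑ i, (1 : ℝ) / (m i)}

/-- A set is Buck measurable if `μ*(S) + μ*(ℕ \ S) = 1`. -/
def BuckMeasurable (S : Set ℕ) : Prop :=
  buckDensity S + buckDensity Sᶜ = 1

/-- `R(S : m)`: the number of residue classes modulo `m` occupied by `S`. -/
noncomputable def residueCount (S : Set ℕ) (m : ℕ) : ℕ :=
  ((fun s => s % m) '' S).ncard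

def covSet (S : Set ℕ) : Set ℝ :=
  {x : ℝ | ∃ (k : ℕ) (r m : Fin k → ℕ), (∀ i, 0 < m i) ∧
    (S ⊆ ⋃ i, {n : ℕ | n ≡ r i [MOD m i]}) ∧ x = ∑ i, (1 : ℝ) / (m i)}

lemma buckDensity_eq (S : Set ℕ) : buckDensity S = sInf (covSet S) := rfl

lemma covSet_nonneg {S : Set ℕ} {x : ℝ} (hx : x ∈ covSet S) : 0 ≤ x := by
  obtain ⟨k, r, m, hm, -, rfl⟩ := hx
  exact Finset.sum_nonneg fun i _ => by positivity

lemma one_mem_covSet (S : Set ℕ) : (1:ℝ) ∈ covSet S := by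
  refine ⟨1, fun _ => 0, fun _ => 1, fun i => one_pos, fun n _ => ?_, by simp⟩
  exact Set.mem_iUnion.2 ⟨0, Nat.modEq_one⟩

lemma covSet_nonempty (S : Set ℕ) : (covSet S).Nonempty := ⟨1, one_mem_covSet S⟩

lemma covSet_bddBelow (S : Set ℕ) : BddBelow (covSet S) :=
  ⟨0, fun _ hx => covSet_nonneg hx⟩

lemma bd_le_of_mem {S : Set ℕ} {x : ℝ} (hx : x ∈ covSet S) : buckDensity S ≤ x :=
  csInf_le (covSet_bddBelow S) hx

lemma bd_nonneg (S : Set ℕ) : 0 ≤ buckDensity S :=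
  le_csInf (covSet_nonempty S) fun _ hx => covSet_nonneg hx

lemma bd_le_one (S : Set ℕ) : buckDensity S ≤ 1 := bd_le_of_mem (one_mem_covSet S)

lemma covSet_anti {S T : Set ℕ} (h : S ⊆ T) : covSet T ⊆ covSet S := by
  rintro x ⟨k, r, m, hm, hcov, rfl⟩
  exact ⟨k, r, m, hm, h.trans hcov, rfl⟩

lemma bd_mono {S T : Set ℕ} (h : S ⊆ T) : buckDensity S ≤ buckDensity T :=
  csInf_le_csInf (covSet_bddBelow S) (covSet_nonempty T) (covSet_anti h)

lemma bd_empty_le : buckDensity (∅ : Set ℕ) ≤ 0 :=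
  bd_le_of_mem ⟨0, Fin.elim0, Fin.elim0, fun i => i.elim0, by simp, by simp⟩

lemma exists_near (S : Set ℕ) {ε : ℝ} (hε : 0 < ε) :
    ∃ x ∈ covSet S, x < buckDensity S + ε :=
  exists_lt_of_csInf_lt (covSet_nonempty S)
    (lt_add_of_pos_right _ hε : sInf (covSet S) < sInf (covSet S) + ε)

lemma filter_modEq_card {M m r : ℕ} (hm : 0 < m) (hdvd : m ∣ M) :
    ((Finset.range M).filter (fun t => t ≡ r [MOD m])).card = M / m := by
  have himg : (Finset.range M).filter (fun t => t ≡ r [MOD m])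
      = (Finset.range (M / m)).image (fun j => r % m + j * m) := by
    ext t
    simp only [Finset.mem_filter, Finset.mem_range, Finset.mem_image]
    constructor
    · rintro ⟨htM, ht⟩
      refine ⟨t / m, ?_, ?_⟩
      · rw [Nat.div_lt_iff_lt_mul hm, Nat.div_mul_cancel hdvd]; exact htM
      · have h1 : t % m = r % m := ht
        calc r % m + t / m * m = t % m + t / m * m := by rw [h1]
          _ = t := Nat.mod_add_div' t m
    · rintro ⟨j, hj, rfl⟩
      constructor
      · have hjm : (j + 1) * m ≤ M / m * m := Nat.mul_le_mul_right m hj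
        rw [Nat.div_mul_cancel hdvd] at hjm
        calc r % m + j * m < m + j * m := by
              have := Nat.mod_lt r hm; omega
          _ = (j+1) * m := by ring
          _ ≤ M := hjm
      · show (r % m + j * m) % m = r % m
        simp [Nat.add_mul_mod_self_right, Nat.mod_mod_of_dvd]
  rw [himg, Finset.card_image_of_injective _ (fun a b hab => by
    have : a * m = b * m := by omega
    exact Nat.eq_of_mul_eq_mul_right hm this), Finset.card_range]

lemma filter_dvd_card {M c : ℕ} (hc : 0 < c) (hdvd : c ∣ M) :
    ((Finset.range M).filter (fun t => c ∣ t)).card = M / c := by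
  have : ((Finset.range M).filter (fun t => c ∣ t))
      = ((Finset.range M).filter (fun t => t ≡ 0 [MOD c])) := by
    apply Finset.filter_congr; intro t _
    simp [Nat.modEq_zero_iff_dvd]
  rw [this, filter_modEq_card hc hdvd]

lemma normalization {S : Set ℕ} {k : ℕ} {r m : Fin k → ℕ} (hm : ∀ i, 0 < m i)
    (hcov : S ⊆ ⋃ i, {n : ℕ | n ≡ r i [MOD m i]}) {M : ℕ} (hM : 0 < M)
    (hdvd : ∀ i, m i ∣ M) :
    ∃ T : Finset ℕ, T ⊆ Finset.range M ∧
      (∀ n ∈ S, n % M ∈ T ∧ n ≡ n % M [MOD M]) ∧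
      ((T.card : ℝ) / M ≤ ∑ i, (1:ℝ) / (m i)) := by
  classical
  refine ⟨(Finset.range M).filter (fun t => ∃ i, t ≡ r i [MOD m i]),
    Finset.filter_subset _ _, ?_, ?_⟩
  · intro n hn
    obtain ⟨i, hi⟩ := Set.mem_iUnion.1 (hcov hn)
    have hMeq : n ≡ n % M [MOD M] := (Nat.mod_mod_of_dvd n dvd_rfl).symm
    refine ⟨Finset.mem_filter.2 ⟨Finset.mem_range.2 (Nat.mod_lt _ hM), ⟨i, ?_⟩⟩, hMeq⟩
    exact ((hMeq.symm).of_dvd (hdvd i)).trans hi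
  · have hsub : (Finset.range M).filter (fun t => ∃ i, t ≡ r i [MOD m i]) ⊆
        Finset.univ.biUnion (fun i : Fin k => (Finset.range M).filter (fun t => t ≡ r i [MOD m i])) := by
      intro t ht
      obtain ⟨htM, i, hi⟩ := Finset.mem_filter.1 ht
      exact Finset.mem_biUnion.2 ⟨i, Finset.mem_univ _, Finset.mem_filter.2 ⟨htM, hi⟩⟩
    have hcard := (Finset.card_le_card hsub).trans (Finset.card_biUnion_le)
    have hcast : ((Finset.range M).filter (fun t => ∃ i, t ≡ r i [MOD m i])).card ≤
        ∑ i : Fin k, (M / m i) := by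
      calc _ ≤ _ := hcard
        _ = ∑ i : Fin k, (M / m i) := by
            refine Finset.sum_congr rfl fun i _ => filter_modEq_card (hm i) (hdvd i)
    rw [div_le_iff₀ (by exact_mod_cast hM)]
    calc (_ : ℝ) ≤ (∑ i : Fin k, (M / m i : ℕ) : ℝ) := by exact_mod_cast hcast
      _ = ∑ i : Fin k, ((M:ℝ) / m i) := by
          refine Finset.sum_congr rfl fun i _ => ?_
          rw [Nat.cast_div (hdvd i) (by exact_mod_cast (hm i).ne')]
      _ = (∑ i, (1:ℝ)/(m i)) * M := by
          rw [Finset.sum_mul]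
          refine Finset.sum_congr rfl fun i _ => by ring

lemma resCover_mem {S : Set ℕ} {L : ℕ} (hL : 0 < L) (T : Finset ℕ)
    (hcov : ∀ n ∈ S, ∃ t ∈ T, n ≡ t [MOD L]) :
    ((T.card : ℝ) / L) ∈ covSet S := by
  classical
  refine ⟨T.card, fun i => (T.equivFin.symm i : ℕ), fun _ => L, fun _ => hL, ?_, ?_⟩
  · intro n hn
    obtain ⟨t, ht, hmod⟩ := hcov n hn
    refine Set.mem_iUnion.2 ⟨T.equivFin ⟨t, ht⟩, ?_⟩
    simpa using hmod
  · rw [Finset.sum_const, Finset.card_univ, Fintype.card_fin, nsmul_eq_mul]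
    ring

lemma covSet_union {A B : Set ℕ} {x y : ℝ} (hx : x ∈ covSet A) (hy : y ∈ covSet B) :
    x + y ∈ covSet (A ∪ B) := by
  obtain ⟨k₁, r₁, m₁, hm₁, hc₁, rfl⟩ := hx
  obtain ⟨k₂, r₂, m₂, hm₂, hc₂, rfl⟩ := hy
  refine ⟨k₁ + k₂, Fin.addCases r₁ r₂, Fin.addCases m₁ m₂, ?_, ?_, ?_⟩
  · intro i
    refine Fin.addCases (fun j => ?_) (fun j => ?_) i <;> simp [hm₁, hm₂]
  · rintro n (hn | hn)
    · obtain ⟨i, hi⟩ := Set.mem_iUnion.1 (hc₁ hn)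
      exact Set.mem_iUnion.2 ⟨Fin.castAdd k₂ i, by simpa using hi⟩
    · obtain ⟨i, hi⟩ := Set.mem_iUnion.1 (hc₂ hn)
      exact Set.mem_iUnion.2 ⟨Fin.natAdd k₁ i, by simpa using hi⟩
  · rw [Fin.sum_univ_add]
    congr 1 <;> exact Finset.sum_congr rfl fun i _ => by simp

lemma one_le_covSet_univ {x : ℝ} (hx : x ∈ covSet Set.univ) : 1 ≤ x := by
  obtain ⟨k, r, m, hm, hcov, rfl⟩ := hx
  set M : ℕ := ∏ i, m i with hMdef
  have hM : 0 < M := Finset.prod_pos fun i _ => hm i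
  have hdvd : ∀ i, m i ∣ M := fun i => Finset.dvd_prod_of_mem m (Finset.mem_univ i)
  obtain ⟨T, hTsub, hTmod, hTcard⟩ := normalization hm hcov hM hdvd
  have hrange : Finset.range M ⊆ T := by
    intro t ht
    have := (hTmod t (Set.mem_univ t)).1
    rwa [Nat.mod_eq_of_lt (Finset.mem_range.1 ht)] at this
  have hMT : M ≤ T.card := by
    simpa using Finset.card_le_card hrange
  calc (1:ℝ) = (M:ℝ)/M := by field_simp
    _ ≤ (T.card : ℝ)/M := by
        apply div_le_div_of_nonneg_right (by exact_mod_cast hMT) (by exact_mod_cast hM.le)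
    _ ≤ _ := hTcard

lemma bd_union_le (A B : Set ℕ) :
    buckDensity (A ∪ B) ≤ buckDensity A + buckDensity B := by
  refine le_of_forall_pos_le_add fun ε hε => ?_
  obtain ⟨x, hx, hxlt⟩ := exists_near A (half_pos hε)
  obtain ⟨y, hy, hylt⟩ := exists_near B (half_pos hε)
  have := bd_le_of_mem (covSet_union hx hy)
  linarith

lemma one_le_bd_add_bd_compl (A : Set ℕ) :
    1 ≤ buckDensity A + buckDensity Aᶜ := by
  refine le_of_forall_pos_le_add fun ε hε => ?_
  obtain ⟨x, hx, hxlt⟩ := exists_near A (half_pos hε)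
  obtain ⟨y, hy, hylt⟩ := exists_near Aᶜ (half_pos hε)
  have hmem : x + y ∈ covSet (A ∪ Aᶜ) := covSet_union hx hy
  rw [Set.union_compl_self] at hmem
  have := one_le_covSet_univ hmem
  linarith

lemma bd_smul_le {a : ℕ} (ha : 0 < a) (S : Set ℕ) :
    buckDensity ((fun s => a * s) '' S) ≤ buckDensity S / a := by
  have haR : (0:ℝ) < a := by exact_mod_cast ha
  rw [le_div_iff₀ haR, mul_comm]
  refine le_csInf (covSet_nonempty S) ?_
  rintro x ⟨k, r, m, hm, hcov, rfl⟩
  have hmem : ((∑ i, (1:ℝ)/(m i)) / a) ∈ covSet ((fun s => a * s) '' S) := by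
    refine ⟨k, fun i => a * r i, fun i => a * m i, fun i => Nat.mul_pos ha (hm i), ?_, ?_⟩
    · rintro n ⟨s, hs, rfl⟩
      obtain ⟨i, hi⟩ := Set.mem_iUnion.1 (hcov hs)
      exact Set.mem_iUnion.2 ⟨i, Nat.ModEq.mul_left' (c := a) hi⟩
    · rw [Finset.sum_div]
      refine Finset.sum_congr rfl fun i _ => ?_
      push_cast
      rw [div_div, one_div, one_div, mul_comm]
  have := bd_le_of_mem hmem
  calc (a:ℝ) * buckDensity ((fun s => a * s) '' S) ≤ a * ((∑ i, (1:ℝ)/(m i)) / a) :=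
        mul_le_mul_of_nonneg_left this haR.le
    _ = ∑ i, (1:ℝ)/(m i) := by field_simp

lemma bd_nonmult_le {b : ℕ} (hb : 0 < b) :
    buckDensity {n : ℕ | ¬ b ∣ n} ≤ 1 - 1/(b:ℝ) := by
  have hbR : (0:ℝ) < b := by exact_mod_cast hb
  have hmem := resCover_mem (S := {n : ℕ | ¬ b ∣ n}) hb ((Finset.range b).erase 0) ?_
  · have hcard : ((Finset.range b).erase 0).card = b - 1 := by
      rw [Finset.card_erase_of_mem (Finset.mem_range.2 hb), Finset.card_range]
    have := bd_le_of_mem hmem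
    rw [hcard] at this
    calc buckDensity {n : ℕ | ¬ b ∣ n} ≤ ((b - 1 : ℕ) : ℝ) / b := this
      _ = ((b:ℝ) - 1)/b := by
          congr 1
          have : (1:ℕ) ≤ b := hb
          push_cast [this]; ring
      _ = 1 - 1/(b:ℝ) := by field_simp
  · intro n hn
    refine ⟨n % b, ?_, (Nat.mod_mod_of_dvd n dvd_rfl).symm⟩
    refine Finset.mem_erase.2 ⟨?_, Finset.mem_range.2 (Nat.mod_lt _ hb)⟩
    intro h0
    exact hn ((Nat.dvd_iff_mod_eq_zero).2 h0)

lemma bd_mult_le {b : ℕ} (hb : 0 < b) :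
    buckDensity {n : ℕ | b ∣ n} ≤ 1/(b:ℝ) := by
  have hmem := resCover_mem (S := {n : ℕ | b ∣ n}) hb {0} ?_
  · have := bd_le_of_mem hmem
    simpa using this
  · intro n hn
    exact ⟨0, Finset.mem_singleton_self 0, (Nat.modEq_zero_iff_dvd).2 hn⟩

lemma bd_biUnion_le (f : ℕ → Set ℕ) (N : ℕ) :
    buckDensity (⋃ i < N, f i) ≤ ∑ i ∈ Finset.range N, buckDensity (f i) := by
  induction N with
  | zero => simpa using bd_empty_le
  | succ n ih =>
      rw [Set.biUnion_lt_succ, Finset.sum_range_succ]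
      exact (bd_union_le _ _).trans (add_le_add_left ih _)

lemma bd_subtract {A : Set ℕ} {c : ℕ} (hc : 0 < c) (hA : ∀ n ∈ A, ¬ c ∣ n) :
    buckDensity A + 1/(c:ℝ) ≤ buckDensity (A ∪ {n : ℕ | c ∣ n}) := by
  classical
  have hcR : (0:ℝ) < c := by exact_mod_cast hc
  refine le_of_forall_pos_le_add fun ε hε => ?_
  obtain ⟨x, hx, hxlt⟩ := exists_near (A ∪ {n : ℕ | c ∣ n}) hε
  obtain ⟨k, r, m, hm, hcov, rfl⟩ := hx
  set M : ℕ := c * ∏ i, m i with hMdef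
  have hM : 0 < M := Nat.mul_pos hc (Finset.prod_pos fun i _ => hm i)
  have hcM : c ∣ M := Dvd.intro _ rfl
  have hdvd : ∀ i, m i ∣ M :=
    fun i => (Finset.dvd_prod_of_mem m (Finset.mem_univ i)).mul_left c
  obtain ⟨T, hTsub, hTmod, hTcard⟩ := normalization hm hcov hM hdvd
  -- multiples of c in range M are in T
  have hmul : (Finset.range M).filter (fun t => c ∣ t) ⊆ T.filter (fun t => c ∣ t) := by
    intro t ht
    obtain ⟨htM, htc⟩ := Finset.mem_filter.1 ht
    have htT := (hTmod t (Or.inr htc)).1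
    rw [Nat.mod_eq_of_lt (Finset.mem_range.1 htM)] at htT
    exact Finset.mem_filter.2 ⟨htT, htc⟩
  have hmulcard : M / c ≤ (T.filter (fun t => c ∣ t)).card := by
    rw [← filter_dvd_card hc hcM]
    exact Finset.card_le_card hmul
  -- T' covers A
  have hcovA : ∀ n ∈ A, ∃ t ∈ T.filter (fun t => ¬ c ∣ t), n ≡ t [MOD M] := by
    intro n hn
    obtain ⟨htT, hmod⟩ := hTmod n (Or.inl hn)
    refine ⟨n % M, Finset.mem_filter.2 ⟨htT, ?_⟩, hmod⟩
    intro hdvd'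
    exact hA n hn ((Nat.dvd_mod_iff hcM).1 hdvd')
  have hbdA := bd_le_of_mem (resCover_mem hM _ hcovA)
  -- card arithmetic
  have hsplit := Finset.card_filter_add_card_filter_not (s := T) (p := fun t => c ∣ t)
  have hMR : (0:ℝ) < M := by exact_mod_cast hM
  have hMc : ((M / c : ℕ) : ℝ) = (M:ℝ)/c := Nat.cast_div hcM (by exact_mod_cast hc.ne')
  have hkey : ((T.filter (fun t => ¬ c ∣ t)).card : ℝ) / M + 1/(c:ℝ) ≤ (T.card : ℝ)/M := by
    have h1 : ((T.filter (fun t => ¬ c ∣ t)).card : ℝ)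
        = (T.card : ℝ) - ((T.filter (fun t => c ∣ t)).card : ℝ) := by
      have : ((T.filter (fun t => c ∣ t)).card : ℝ) + ((T.filter (fun t => ¬ c ∣ t)).card : ℝ)
          = (T.card : ℝ) := by exact_mod_cast congrArg (Nat.cast (R := ℝ)) hsplit
      linarith
    have h2 : ((M:ℝ)/c) ≤ ((T.filter (fun t => c ∣ t)).card : ℝ) := by
      rw [← hMc]; exact_mod_cast hmulcard
    have h4 : (M:ℝ) ≤ ((T.filter (fun t => c ∣ t)).card : ℝ) * c := (div_le_iff₀ hcR).1 h2
    have h3 : (1:ℝ)/c ≤ ((T.filter (fun t => c ∣ t)).card : ℝ)/M := by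
      rw [div_le_div_iff₀ hcR hMR]; linarith
    rw [h1, sub_div]
    have h5 : ((T.filter (fun t => c ∣ t)).card : ℝ)/M ≤ ((T.filter (fun t => c ∣ t)).card : ℝ)/M := le_refl _
    linarith
  calc buckDensity A + 1/(c:ℝ) ≤ ((T.filter (fun t => ¬ c ∣ t)).card : ℝ)/M + 1/c :=
        add_le_add_left hbdA _
    _ ≤ (T.card : ℝ)/M := hkey
    _ ≤ ∑ i, (1:ℝ)/(m i) := hTcard
    _ ≤ buckDensity (A ∪ {n : ℕ | c ∣ n}) + ε := hxlt.le

lemma div_mul_div_dvd {a b c : ℕ} (ha : 0 < b) (h : a ∣ b) (h' : b ∣ c) :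
    (b/a) * (c/b) = c / a := by
  rw [Nat.div_mul_div_comm h h', mul_comm a b, Nat.mul_div_mul_left _ _ ha]

lemma key : ∀ (N : ℕ) (b : ℕ → ℕ) (H : ℕ → Set ℕ),
    (∀ i, 0 < b i) → StrictMono b → (∀ i, b i ∣ b (i + 1)) →
    (∀ i, BuckMeasurable (H i)) →
    (∀ i x, x ∈ H i → ∀ j, Nat.Coprime x (b j)) →
    buckDensity (⋃ i < N, (fun s => b i * s) '' H i)ᶜ ≤
      1 - ∑ i ∈ Finset.range N, buckDensity (H i) / (b i : ℝ) := by
  intro N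
  induction N with
  | zero => intro b H _ _ _ _ _; simpa using bd_le_one _
  | succ N ih =>
      intro b H hbpos hbmono hbd hH hcop
      have hchain : ∀ i j, i ≤ j → b i ∣ b j := by
        intro i j hij
        induction j with
        | zero => simpa [Nat.le_zero.1 hij] using dvd_rfl
        | succ j ihj =>
            rcases Nat.lt_or_ge i (j+1) with h | h
            · exact (ihj (Nat.lt_succ_iff.1 h)).trans (hbd j)
            · have : i = j + 1 := le_antisymm hij h
              simp [this]
      set c₀ := b 0 with hc₀
      set c := b 1 / b 0 with hcdef
      have hb01 : b 0 ∣ b 1 := hbd 0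
      have hcmul : c * b 0 = b 1 := Nat.div_mul_cancel hb01
      have hcpos : 0 < c := by
        rcases Nat.eq_zero_or_pos c with h | h
        · exfalso; rw [h, zero_mul] at hcmul; exact (hbpos 1).ne' hcmul.symm
        · exact h
      have hcgt1 : 1 < c := by
        rcases Nat.lt_or_ge 1 c with h | h
        · exact h
        · exfalso
          have : c = 1 := le_antisymm h hcpos
          rw [this, one_mul] at hcmul
          exact absurd hcmul (hbmono (show 0 < 1 by omega)).ne
      have hcb1 : c ∣ b 1 := Nat.div_dvd_of_dvd hb01
      -- shifted sequence
      set b'' : ℕ → ℕ := fun j => b (j + 1) / b 1 with hb''def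
      have hb1dvd : ∀ j, b 1 ∣ b (j + 1) := fun j => hchain 1 (j+1) (by omega)
      have hb''mul : ∀ j, b'' j * b 1 = b (j + 1) := fun j => Nat.div_mul_cancel (hb1dvd j)
      have hb''pos : ∀ j, 0 < b'' j := by
        intro j
        rcases Nat.eq_zero_or_pos (b'' j) with h | h
        · exfalso
          have := hb''mul j
          rw [h, zero_mul] at this
          exact (hbpos (j+1)).ne' this.symm
        · exact h
      have hb''mono : StrictMono b'' := by
        apply strictMono_nat_of_lt_succ
        intro j
        have h1 : b'' j * b 1 < b'' (j+1) * b 1 := by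
          rw [hb''mul j, hb''mul (j+1)]
          exact hbmono (by omega)
        exact Nat.lt_of_mul_lt_mul_right h1
      have hb''dvd : ∀ j, b'' j ∣ b'' (j + 1) := by
        intro j
        refine ⟨b (j+2) / b (j+1), ?_⟩
        rw [hb''def]
        exact (div_mul_div_dvd (hbpos (j+1)) (hb1dvd j) (hbd (j+1))).symm
      have hcb'' : ∀ j, c * b'' j = b (j + 1) / b 0 := by
        intro j
        rw [hcdef, hb''def]
        exact div_mul_div_dvd (hbpos 1) hb01 (hb1dvd j)
      -- coprimality facts
      have hcopH : ∀ i x, x ∈ H i → ∀ j, Nat.Coprime x (b'' j) := by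
        intro i x hx j
        exact (hcop i x hx (j+1)).coprime_dvd_right (Nat.div_dvd_of_dvd (hb1dvd j))
      -- sets
      set E₁ : Set ℕ := (H 0)ᶜ \ {n : ℕ | c ∣ n} with hE₁
      set F : Set ℕ := (⋃ j < N, (fun s => b'' j * s) '' H (j+1))ᶜ with hF
      set E : Set ℕ := (H 0)ᶜ ∩ (⋃ j < N, (fun s => (b (j+1) / b 0) * s) '' H (j+1))ᶜ with hE
      -- main decomposition
      have hdecomp : (⋃ i < N + 1, (fun s => b i * s) '' H i)ᶜ ⊆
          {n : ℕ | ¬ b 0 ∣ n} ∪ (fun s => b 0 * s) '' E := by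
        intro n hn
        simp only [Set.mem_compl_iff, Set.mem_iUnion] at hn
        push_neg at hn
        by_cases h0 : b 0 ∣ n
        · right
          obtain ⟨s, rfl⟩ := h0
          refine ⟨s, ?_, rfl⟩
          constructor
          · intro hs
            exact hn 0 (by omega) ⟨s, hs, rfl⟩
          · intro hs
            simp only [Set.mem_iUnion] at hs
            obtain ⟨j, hj, t, ht, hts⟩ := hs
            refine hn (j+1) (by omega) ⟨t, ht, ?_⟩
            rw [← hts, ← mul_assoc]
            congr 1
            rw [Nat.mul_div_cancel' (hchain 0 (j+1) (by omega))]
        · exact Or.inl h0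
      have hEdecomp : E ⊆ E₁ ∪ (fun s => c * s) '' F := by
        intro x hx
        obtain ⟨hx1, hx2⟩ := hx
        by_cases hcx : c ∣ x
        · right
          obtain ⟨y, rfl⟩ := hcx
          refine ⟨y, ?_, rfl⟩
          intro hy
          simp only [Set.mem_iUnion] at hy
          obtain ⟨j, hj, t, ht, hty⟩ := hy
          apply hx2
          simp only [Set.mem_iUnion]
          refine ⟨j, hj, t, ht, ?_⟩
          rw [← hty, ← mul_assoc, hcb'' j]
        · exact Or.inl ⟨hx1, hcx⟩
      -- multiples of c are in (H 0)ᶜ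
      have hDsub : {n : ℕ | c ∣ n} ⊆ (H 0)ᶜ := by
        intro x hcx hx0
        have hcop1 : Nat.Coprime x (b 1) := hcop 0 x hx0 1
        have : c ∣ Nat.gcd x (b 1) := Nat.dvd_gcd hcx hcb1
        rw [hcop1] at this
        exact absurd hcgt1 (not_lt.2 (Nat.le_of_dvd one_pos this))
      -- bound bd E₁
      have hE₁sub : E₁ ∪ {n : ℕ | c ∣ n} ⊆ (H 0)ᶜ := by
        rintro x (hx | hx)
        · exact hx.1
        · exact hDsub hx
      have hbE₁ : buckDensity E₁ + 1/(c:ℝ) ≤ buckDensity (H 0)ᶜ := by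
        refine (bd_subtract hcpos ?_).trans (bd_mono hE₁sub)
        intro n hn
        exact hn.2
      -- bound bd F via IH
      have hbF : buckDensity F ≤ 1 - ∑ j ∈ Finset.range N, buckDensity (H (j+1)) / (b'' j : ℝ) :=
        ih b'' (fun j => H (j+1)) hb''pos hb''mono hb''dvd (fun j => hH (j+1))
          (fun i x hx j => hcopH (i+1) x hx j)
      -- real-number setup
      set β0 : ℝ := (b 0 : ℝ) with hβ0
      set β1 : ℝ := (b 1 : ℝ) with hβ1
      set γ : ℝ := (c : ℝ) with hγ
      have hβ0pos : (0:ℝ) < β0 := by rw [hβ0]; exact_mod_cast hbpos 0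
      have hβ1pos : (0:ℝ) < β1 := by rw [hβ1]; exact_mod_cast hbpos 1
      have hγpos : (0:ℝ) < γ := by rw [hγ]; exact_mod_cast hcpos
      have hγβ0 : γ * β0 = β1 := by rw [hγ, hβ0, hβ1]; exact_mod_cast hcmul
      set s : ℝ := ∑ j ∈ Finset.range N, buckDensity (H (j+1)) / (b (j+1) : ℝ) with hs
      -- rewrite hbF in terms of s
      have hsum : ∑ j ∈ Finset.range N, buckDensity (H (j+1)) / (b'' j : ℝ) = β1 * s := by
        rw [hs, Finset.mul_sum]
        refine Finset.sum_congr rfl fun j _ => ?_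
        have hbj : (b'' j : ℝ) * β1 = (b (j+1) : ℝ) := by rw [hβ1]; exact_mod_cast hb''mul j
        have hbjpos : (0:ℝ) < (b'' j : ℝ) := by exact_mod_cast hb''pos j
        have hbj1pos : (0:ℝ) < (b (j+1) : ℝ) := by exact_mod_cast hbpos (j+1)
        rw [eq_comm, mul_div_assoc', div_eq_div_iff hbj1pos.ne' hbjpos.ne']
        linear_combination buckDensity (H (j+1)) * hbj
      rw [hsum] at hbF
      -- chain of inequalities
      have h1 : buckDensity (⋃ i < N + 1, (fun s => b i * s) '' H i)ᶜ ≤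
          (1 - 1/β0) + buckDensity E / β0 := by
        calc buckDensity (⋃ i < N + 1, (fun s => b i * s) '' H i)ᶜ
            ≤ buckDensity ({n : ℕ | ¬ b 0 ∣ n} ∪ (fun s => b 0 * s) '' E) := bd_mono hdecomp
          _ ≤ buckDensity {n : ℕ | ¬ b 0 ∣ n} + buckDensity ((fun s => b 0 * s) '' E) :=
              bd_union_le _ _
          _ ≤ (1 - 1/β0) + buckDensity E / β0 :=
              add_le_add (bd_nonmult_le (hbpos 0)) (bd_smul_le (hbpos 0) E)
      have h2 : buckDensity E ≤ buckDensity E₁ + buckDensity F / γ := by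
        calc buckDensity E ≤ buckDensity (E₁ ∪ (fun s => c * s) '' F) := bd_mono hEdecomp
          _ ≤ buckDensity E₁ + buckDensity ((fun s => c * s) '' F) := bd_union_le _ _
          _ ≤ buckDensity E₁ + buckDensity F / γ :=
              add_le_add_right (bd_smul_le hcpos F) _
      have hμ0 : buckDensity (H 0)ᶜ = 1 - buckDensity (H 0) := by
        have := hH 0; rw [BuckMeasurable] at this; linarith
      rw [hμ0] at hbE₁
      have h5 : (1 - β1*s)/γ = 1/γ - β0*s := by
        rw [← hγβ0]; field_simp
      have h6 : buckDensity F / γ ≤ 1/γ - β0*s := by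
        rw [← h5]
        exact div_le_div_of_nonneg_right hbF hγpos.le
      have h7 : buckDensity E ≤ 1 - buckDensity (H 0) - β0*s := by linarith
      have h8 : buckDensity E / β0 ≤ (1 - buckDensity (H 0) - β0*s)/β0 :=
        div_le_div_of_nonneg_right h7 hβ0pos.le
      have h9 : (1 - buckDensity (H 0) - β0*s)/β0 = 1/β0 - buckDensity (H 0)/β0 - s := by
        field_simp
      rw [Finset.sum_range_succ']
      have : ∑ i ∈ Finset.range N, buckDensity (H (i+1)) / (b (i+1) : ℝ) = s := rfl
      rw [this]
      linarith

theorem stmt_1 (b : ℕ → ℕ) (hb : StrictMono b) (hbd : ∀ i, b i ∣ b (i + 1))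
    (H : ℕ → Set ℕ) (hH : ∀ i, BuckMeasurable (H i))
    (hcop : ∀ x ∈ ⋃ i, H i, ∀ j, Nat.Coprime x (b j)) :
    BuckMeasurable (⋃ i, (fun s => b i * s) '' H i) ∧
      HasSum (fun i => buckDensity (H i) / (b i : ℝ))
        (buckDensity (⋃ i, (fun s => b i * s) '' H i)) := by
  -- positivity of b
  have hb0pos : 0 < b 0 := by
    rcases Nat.eq_zero_or_pos (b 0) with h | h
    · exfalso
      have h1 : b 1 = 0 := by
        have := hbd 0; rw [h] at this; exact zero_dvd_iff.1 this
      have := hb (show 0 < 1 by omega)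
      omega
    · exact h
  have hbpos : ∀ i, 0 < b i := fun i => lt_of_lt_of_le hb0pos (hb.le_iff_le.2 (Nat.zero_le i))
  have hchain : ∀ i j, i ≤ j → b i ∣ b j := by
    intro i j hij
    induction j with
    | zero => simpa [Nat.le_zero.1 hij] using dvd_rfl
    | succ j ihj =>
        rcases Nat.lt_or_ge i (j+1) with h | h
        · exact (ihj (Nat.lt_succ_iff.1 h)).trans (hbd j)
        · have : i = j + 1 := le_antisymm hij h
          simp [this]
  have hgrow : ∀ i, 2^i ≤ b i := by
    intro i
    induction i with
    | zero => rw [pow_zero]; exact hb0pos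
    | succ i ihi =>
        have hdvd := hbd i
        obtain ⟨k, hk⟩ := hdvd
        have hklt : 2 ≤ k := by
          by_contra hcon
          interval_cases k
          · have h0 : b (i+1) = 0 := by rw [hk, mul_zero]
            exact absurd h0 (hbpos (i+1)).ne'
          · have h1 : b (i+1) = b i := by rw [hk, mul_one]
            exact absurd h1 (hb (Nat.lt_succ_self i)).ne'
        calc 2^(i+1) = 2^i * 2 := by ring
          _ ≤ b i * k := Nat.mul_le_mul ihi hklt
          _ = b (i+1) := hk.symm
  have hcop' : ∀ i x, x ∈ H i → ∀ j, Nat.Coprime x (b j) := by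
    intro i x hx j
    exact hcop x (Set.mem_iUnion.2 ⟨i, hx⟩) j
  set Hset : Set ℕ := ⋃ i, (fun s => b i * s) '' H i with hHset
  set a : ℕ → ℝ := fun i => buckDensity (H i) / (b i : ℝ) with ha
  have hanonneg : ∀ i, 0 ≤ a i := fun i =>
    div_nonneg (bd_nonneg _) (by positivity)
  have hale : ∀ i, a i ≤ (1/2:ℝ)^i := by
    intro i
    have h1 : a i ≤ 1 / (b i : ℝ) :=
      div_le_div_of_nonneg_right (bd_le_one _) (le_of_lt (by exact_mod_cast hbpos i : (0:ℝ) < (b i : ℝ)))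
    have h2 : (1:ℝ) / (b i : ℝ) ≤ 1 / (2^i : ℝ) := by
      apply div_le_div_of_nonneg_left one_pos.le (by positivity)
      exact_mod_cast hgrow i
    calc a i ≤ 1 / (b i : ℝ) := h1
      _ ≤ 1/(2^i : ℝ) := h2
      _ = (1/2:ℝ)^i := by rw [div_pow]; norm_num
  have hsummable : Summable a :=
    Summable.of_nonneg_of_le hanonneg hale summable_geometric_two
  set L : ℝ := ∑' i, a i with hL
  have hpartial : Filter.Tendsto (fun N => ∑ i ∈ Finset.range N, a i)
      Filter.atTop (nhds L) := hsummable.hasSum.tendsto_sum_nat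
  -- upper bound for Hset
  have hupper : ∀ N, buckDensity Hset ≤ ∑ i ∈ Finset.range N, a i + 1/(b N : ℝ) := by
    intro N
    have hsub : Hset ⊆ (⋃ i < N, (fun s => b i * s) '' H i) ∪ {n : ℕ | b N ∣ n} := by
      intro x hx
      obtain ⟨i, hi⟩ := Set.mem_iUnion.1 hx
      rcases Nat.lt_or_ge i N with h | h
      · exact Or.inl (Set.mem_iUnion.2 ⟨i, Set.mem_iUnion.2 ⟨h, hi⟩⟩)
      · right
        obtain ⟨t, _, rfl⟩ := hi
        exact Dvd.dvd.mul_right (hchain N i h) t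
    calc buckDensity Hset
        ≤ buckDensity ((⋃ i < N, (fun s => b i * s) '' H i) ∪ {n : ℕ | b N ∣ n}) :=
          bd_mono hsub
      _ ≤ buckDensity (⋃ i < N, (fun s => b i * s) '' H i) + buckDensity {n : ℕ | b N ∣ n} :=
          bd_union_le _ _
      _ ≤ ∑ i ∈ Finset.range N, a i + 1/(b N : ℝ) := by
          refine add_le_add ?_ (bd_mult_le (hbpos N))
          refine (bd_biUnion_le _ N).trans ?_
          refine Finset.sum_le_sum fun i _ => ?_
          exact (bd_smul_le (hbpos i) (H i)).trans (le_refl _)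
  -- lower bound via complement
  have hlowerc : ∀ N, buckDensity Hsetᶜ ≤ 1 - ∑ i ∈ Finset.range N, a i := by
    intro N
    have hsub : Hsetᶜ ⊆ (⋃ i < N, (fun s => b i * s) '' H i)ᶜ := by
      apply Set.compl_subset_compl.2
      intro x hx
      obtain ⟨i, hi⟩ := Set.mem_iUnion.1 hx
      obtain ⟨hlt, hmem⟩ := Set.mem_iUnion.1 hi
      exact Set.mem_iUnion.2 ⟨i, hmem⟩
    exact (bd_mono hsub).trans (key N b H hbpos hb hbd hH hcop')
  -- limits
  have htail : Filter.Tendsto (fun N => (1:ℝ)/(b N : ℝ)) Filter.atTop (nhds 0) := by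
    have hle : ∀ N, (1:ℝ)/(b N : ℝ) ≤ (1/2:ℝ)^N := by
      intro N
      have h2 : (1:ℝ) / (b N : ℝ) ≤ 1 / (2^N : ℝ) := by
        apply div_le_div_of_nonneg_left one_pos.le (by positivity)
        exact_mod_cast hgrow N
      calc (1:ℝ)/(b N : ℝ) ≤ 1/(2^N : ℝ) := h2
        _ = (1/2:ℝ)^N := by rw [div_pow]; norm_num
    exact squeeze_zero (fun N => by positivity) hle
      (tendsto_pow_atTop_nhds_zero_of_lt_one (by norm_num) (by norm_num))
  have hbdle : buckDensity Hset ≤ L := by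
    have hlim : Filter.Tendsto (fun N => ∑ i ∈ Finset.range N, a i + 1/(b N : ℝ))
        Filter.atTop (nhds (L + 0)) := hpartial.add htail
    rw [add_zero] at hlim
    exact ge_of_tendsto' hlim hupper
  have hbdcle : buckDensity Hsetᶜ ≤ 1 - L := by
    have hlim : Filter.Tendsto (fun N => 1 - ∑ i ∈ Finset.range N, a i)
        Filter.atTop (nhds (1 - L)) := (tendsto_const_nhds).sub hpartial
    exact ge_of_tendsto' hlim hlowerc
  have hone := one_le_bd_add_bd_compl Hset
  have hEq : buckDensity Hset = L := by linarith
  constructor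
  · rw [BuckMeasurable]; linarith
  · rw [hEq]
    exact hsummable.hasSum
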